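/- arXiv:2202.04997 — 4 statements merged into one kernel-verified Lean document; each statement's English description precedes it below -/
import Mathlib

section
/- For any graphs G and H with n and m vertices respectively, F(G □ H) ≥ max{m·F(G), n·F(H)}, where G □ H is the Cartesian product. -/
namespace ZeroForcing

/-- One step of the zero forcing process: all vertices forced from blue set `S`
(a blue vertex with exactly one white neighbor forces that neighbor). -/
def step {V : Type*} (G : SimpleGraph V) (S : Set V) : Set V :=
  S ∪ {v | ∃ u ∈ S, G.Adj u v ∧ ∀ w, G.Adj u w → w ∉ S → w = v}

/-- `S` is a zero forcing set: iterating the color-change rule makes everything blue. -/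
def IsZeroForcingSet {V : Type*} (G : SimpleGraph V) (S : Set V) : Prop :=
  ∃ k, (step G)^[k] S = Set.univ

/-- `S` is a failed zero forcing set. -/
def IsFailedSet {V : Type*} (G : SimpleGraph V) (S : Set V) : Prop :=
  ¬ IsZeroForcingSet G S

/-- The zero forcing number `Z(G)`. -/
noncomputable def Z {V : Type*} (G : SimpleGraph V) : ℕ :=
  sInf {k | ∃ S : Set V, S.ncard = k ∧ IsZeroForcingSet G S}

/-- The failed zero forcing number `F(G)`. -/
noncomputable def F {V : Type*} (G : SimpleGraph V) : ℕ :=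
  sSup {k | ∃ S : Set V, S.ncard = k ∧ IsFailedSet G S}

/-- The strong product of two simple graphs. -/
def strongProd {α β : Type*} (G : SimpleGraph α) (H : SimpleGraph β) :
    SimpleGraph (α × β) where
  Adj x y := x ≠ y ∧ (x.1 = y.1 ∨ G.Adj x.1 y.1) ∧ (x.2 = y.2 ∨ H.Adj x.2 y.2)
  symm := by
    constructor
    rintro x y ⟨h1, h2, h3⟩
    exact ⟨h1.symm, h2.imp Eq.symm (fun h => G.adj_symm h), h3.imp Eq.symm (fun h => H.adj_symm h)⟩
  loopless := ⟨fun x h => h.1 rfl⟩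

/-- The lexicographic product of two simple graphs. -/
def lexProd {α β : Type*} (G : SimpleGraph α) (H : SimpleGraph β) :
    SimpleGraph (α × β) where
  Adj x y := G.Adj x.1 y.1 ∨ (x.1 = y.1 ∧ H.Adj x.2 y.2)
  symm := by
    constructor
    rintro x y (h | ⟨h1, h2⟩)
    · exact Or.inl h.symm
    · exact Or.inr ⟨h1.symm, h2.symm⟩
  loopless := by
    constructor
    rintro x (h | ⟨h1, h2⟩)
    · exact G.loopless.irrefl _ h
    · exact H.loopless.irrefl _ h2

/-- The corona `G ∘ H`: one copy of `G` and, for each vertex `a` of `G`, a copy of `H`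
all of whose vertices are joined to `a`. -/
def corona {α β : Type*} (G : SimpleGraph α) (H : SimpleGraph β) :
    SimpleGraph (α ⊕ α × β) where
  Adj x y :=
    match x, y with
    | .inl a, .inl a' => G.Adj a a'
    | .inl a, .inr p => a = p.1
    | .inr p, .inl a' => p.1 = a'
    | .inr p, .inr q => p.1 = q.1 ∧ H.Adj p.2 q.2
  symm := by
    constructor
    rintro (a | p) (a' | q) h
    · exact G.adj_symm h
    · exact h.symm
    · exact h.symm
    · exact ⟨h.1.symm, H.adj_symm h.2⟩
  loopless := by
    constructor
    rintro (a | p) h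
    · exact G.loopless.irrefl _ h
    · exact H.loopless.irrefl _ h.2

end ZeroForcing

namespace ZeroForcing

lemma step_mono {V : Type*} (G : SimpleGraph V) {A B : Set V} (h : A ⊆ B) :
    step G A ⊆ step G B := by
  rintro v (hv | ⟨u, hu, hadj, hforce⟩)
  · exact Or.inl (h hv)
  · exact Or.inr ⟨u, h hu, hadj, fun w hw hwB => hforce w hw (fun hA => hwB (h hA))⟩

lemma box_step_left {α β : Type*} (G : SimpleGraph α) (H : SimpleGraph β) (A : Set α) :
    step (G.boxProd H) (A ×ˢ (Set.univ : Set β)) ⊆ (step G A) ×ˢ (Set.univ : Set β) := by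
  rintro ⟨v1, v2⟩ (hv | ⟨⟨u1, u2⟩, hu, hadj, hforce⟩)
  · exact ⟨Or.inl hv.1, trivial⟩
  · rw [SimpleGraph.boxProd_adj] at hadj
    rcases hadj with ⟨hG, he⟩ | ⟨hH, he⟩
    · refine ⟨Or.inr ⟨u1, hu.1, hG, ?_⟩, trivial⟩
      intro w hw hwA
      have h2 := hforce (w, u2) (by simp [SimpleGraph.boxProd_adj, hw])
        (by simp [Set.mem_prod, hwA])
      exact congrArg Prod.fst h2
    · exact ⟨Or.inl (he ▸ hu.1), trivial⟩

lemma box_step_right {α β : Type*} (G : SimpleGraph α) (H : SimpleGraph β) (A : Set β) :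
    step (G.boxProd H) ((Set.univ : Set α) ×ˢ A) ⊆ (Set.univ : Set α) ×ˢ (step H A) := by
  rintro ⟨v1, v2⟩ (hv | ⟨⟨u1, u2⟩, hu, hadj, hforce⟩)
  · exact ⟨trivial, Or.inl hv.2⟩
  · rw [SimpleGraph.boxProd_adj] at hadj
    rcases hadj with ⟨hG, he⟩ | ⟨hH, he⟩
    · exact ⟨trivial, Or.inl (he ▸ hu.2)⟩
    · refine ⟨trivial, Or.inr ⟨u2, hu.2, hH, ?_⟩⟩
      intro w hw hwA
      have h2 := hforce (u1, w) (by simp [SimpleGraph.boxProd_adj, hw])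
        (by simp [Set.mem_prod, hwA])
      exact congrArg Prod.snd h2

lemma box_iter_left {α β : Type*} (G : SimpleGraph α) (H : SimpleGraph β) (A : Set α)
    (k : ℕ) :
    (step (G.boxProd H))^[k] (A ×ˢ (Set.univ : Set β)) ⊆
      ((step G)^[k] A) ×ˢ (Set.univ : Set β) := by
  induction k with
  | zero => simp
  | succ k ih =>
    rw [Function.iterate_succ_apply', Function.iterate_succ_apply']
    exact (step_mono _ ih).trans (box_step_left G H _)

lemma box_iter_right {α β : Type*} (G : SimpleGraph α) (H : SimpleGraph β) (A : Set β)
    (k : ℕ) :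
    (step (G.boxProd H))^[k] ((Set.univ : Set α) ×ˢ A) ⊆
      (Set.univ : Set α) ×ˢ ((step H)^[k] A) := by
  induction k with
  | zero => simp
  | succ k ih =>
    rw [Function.iterate_succ_apply', Function.iterate_succ_apply']
    exact (step_mono _ ih).trans (box_step_right G H _)

lemma failed_box_left {α β : Type*} [Nonempty β] (G : SimpleGraph α) (H : SimpleGraph β)
    {A : Set α} (hA : IsFailedSet G A) :
    IsFailedSet (G.boxProd H) (A ×ˢ (Set.univ : Set β)) := by
  rintro ⟨k, hk⟩
  refine hA ⟨k, ?_⟩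
  ext v
  simp only [Set.mem_univ, iff_true]
  obtain ⟨b⟩ := ‹Nonempty β›
  exact (box_iter_left G H A k (hk ▸ Set.mem_univ (v, b))).1

lemma failed_box_right {α β : Type*} [Nonempty α] (G : SimpleGraph α) (H : SimpleGraph β)
    {A : Set β} (hA : IsFailedSet H A) :
    IsFailedSet (G.boxProd H) ((Set.univ : Set α) ×ˢ A) := by
  rintro ⟨k, hk⟩
  refine hA ⟨k, ?_⟩
  ext v
  simp only [Set.mem_univ, iff_true]
  obtain ⟨a⟩ := ‹Nonempty α›
  exact (box_iter_right G H A k (hk ▸ Set.mem_univ (a, v))).2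

lemma failedSet_bddAbove {V : Type*} [Fintype V] (G : SimpleGraph V) :
    BddAbove {k | ∃ S : Set V, S.ncard = k ∧ IsFailedSet G S} := by
  refine ⟨Fintype.card V, ?_⟩
  rintro k ⟨S, rfl, -⟩
  simpa [Set.ncard_univ] using Set.ncard_le_ncard (Set.subset_univ S) Set.finite_univ

lemma ncard_prod {α β : Type*} (s : Set α) (t : Set β) :
    (s ×ˢ t).ncard = s.ncard * t.ncard := by
  rw [← Nat.card_coe_set_eq, ← Nat.card_coe_set_eq, ← Nat.card_coe_set_eq,
    ← Nat.card_prod]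
  exact Nat.card_congr (Equiv.Set.prod s t)

lemma F_mem_or_zero {V : Type*} [Fintype V] (G : SimpleGraph V) :
    (∃ S : Set V, S.ncard = F G ∧ IsFailedSet G S) ∨ F G = 0 := by
  by_cases h : {k | ∃ S : Set V, S.ncard = k ∧ IsFailedSet G S}.Nonempty
  · exact Or.inl (Nat.sSup_mem h (failedSet_bddAbove G))
  · right
    rw [F, Set.not_nonempty_iff_eq_empty.mp h]
    exact csSup_empty

end ZeroForcing

theorem failed_zf_boxProd_lower {α β : Type*} [Fintype α] [Fintype β]
    (G : SimpleGraph α) (H : SimpleGraph β) :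
    max (Fintype.card β * ZeroForcing.F G) (Fintype.card α * ZeroForcing.F H) ≤
      ZeroForcing.F (G.boxProd H) := by
  open ZeroForcing in
  rw [max_le_iff]
  constructor
  · rcases F_mem_or_zero G with ⟨S, hS, hfail⟩ | h
    · rcases isEmpty_or_nonempty β with hβ | hβ
      · simp [Fintype.card_eq_zero]
      · refine le_csSup (failedSet_bddAbove _) ⟨S ×ˢ (Set.univ : Set β), ?_, failed_box_left G H hfail⟩
        rw [ncard_prod, hS, Set.ncard_univ, Nat.card_eq_fintype_card, mul_comm]
    · simp [h]
  · rcases F_mem_or_zero H with ⟨S, hS, hfail⟩ | h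
    · rcases isEmpty_or_nonempty α with hα | hα
      · simp [Fintype.card_eq_zero]
      · refine le_csSup (failedSet_bddAbove _) ⟨(Set.univ : Set α) ×ˢ S, ?_, failed_box_right G H hfail⟩
        rw [ncard_prod, hS, Set.ncard_univ, Nat.card_eq_fintype_card]
    · simp [h]
end

section
/- For integers n ≥ 3, F(P_2 □ C_n) ≥ ⌈n/2⌉ + 3⌊n/4⌋, where P_2 □ C_n is the prism over the n-cycle. -/
open Finset SimpleGraph

lemma count_mod4 (n : ℕ) : ((range n).filter (fun m => m % 4 = 3)).card = n / 4 := by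
  induction n with
  | zero => simp
  | succ k ih =>
    rw [range_add_one, filter_insert]
    split_ifs with h
    · rw [card_insert_of_notMem (by simp)]; omega
    · omega

lemma count_mod2 (n : ℕ) : ((range n).filter (fun m => m % 2 = 1)).card = n / 2 := by
  induction n with
  | zero => simp
  | succ k ih =>
    rw [range_add_one, filter_insert]
    split_ifs with h
    · rw [card_insert_of_notMem (by simp)]; omega
    · omega




def zfBnd (n : ℕ) : ℕ := if n % 4 = 3 then n - 2 else n - 1
def zfBlueTop (n m : ℕ) : Prop := m % 4 ≠ 3 ∧ m ≠ n - 1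
def zfBlueBot (n m : ℕ) : Prop := (m % 2 = 1 ∧ m < zfBnd n) ∨ (m = n - 1 ∧ n % 4 ≤ 1)

def zfS (n : ℕ) : Set (Fin 2 × Fin n) :=
  {p | if p.1 = 0 then zfBlueTop n p.2.val else zfBlueBot n p.2.val}

lemma zfS_memTop {n : ℕ} (j : Fin n) : ((0 : Fin 2), j) ∈ zfS n ↔ zfBlueTop n j.val := by
  simp [zfS]

lemma zfS_memBot {n : ℕ} (j : Fin n) : ((1 : Fin 2), j) ∈ zfS n ↔ zfBlueBot n j.val := by
  simp [zfS]

lemma cyc_adj {m : ℕ} (u v : Fin (m+3)) :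
    (cycleGraph (m+3)).Adj u v ↔ v = u - 1 ∨ v = u + 1 := by
  rw [@cycleGraph_adj (m+1) u v]
  constructor
  · rintro (h | h)
    · exact Or.inl (by rw [← h]; abel)
    · exact Or.inr (by rw [← h]; abel)
  · rintro (rfl | rfl)
    · exact Or.inl (by abel)
    · exact Or.inr (by abel)

lemma vsucc' {m : ℕ} (j : Fin (m+3)) (h : j.val ≠ m + 2) : (j + 1).val = j.val + 1 := by
  rw [Fin.val_add_one, if_neg]
  intro hl
  exact h (by rw [hl]; rfl)

lemma vsucc0 {m : ℕ} (j : Fin (m+3)) (h : j.val = m + 2) : (j + 1).val = 0 := by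
  rw [Fin.val_add_one, if_pos (Fin.ext h)]

lemma vpred' {m : ℕ} (j : Fin (m+3)) (h : j.val ≠ 0) : (j - 1).val = j.val - 1 := by
  rw [Fin.coe_sub_one, if_neg]
  intro hl
  exact h (by rw [hl]; rfl)

lemma vpred0 {m : ℕ} (j : Fin (m+3)) (h : j.val = 0) : (j - 1).val = m + 2 := by
  rw [Fin.coe_sub_one, if_pos (Fin.ext h)]

lemma two_white {V : Type*} {G : SimpleGraph V} {S : Set V} {u v : V}
    (hf : ∀ w, G.Adj u w → w ∉ S → w = v) {w1 w2 : V} (hne : w1 ≠ w2)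
    (h1 : G.Adj u w1) (h1' : w1 ∉ S) (h2 : G.Adj u w2) (h2' : w2 ∉ S) : False :=
  hne ((hf w1 h1 h1').trans (hf w2 h2 h2').symm)

lemma zf_stalled (m : ℕ) :
    ZeroForcing.step ((pathGraph 2).boxProd (cycleGraph (m+3))) (zfS (m+3)) = zfS (m+3) := by
  set G := (pathGraph 2).boxProd (cycleGraph (m+3)) with hG
  apply Set.Subset.antisymm _ Set.subset_union_left
  rintro v hv
  rcases hv with hv | hv
  · exact hv
  obtain ⟨u, hu, hadj, hf⟩ := hv
  by_contra hvS
  obtain ⟨i, j⟩ := u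
  have hjlt : j.val < m + 3 := j.isLt
  have hB1 : ((m+3) % 4 = 3 ∧ zfBnd (m+3) = m+1) ∨ ((m+3) % 4 ≠ 3 ∧ zfBnd (m+3) = m+2) := by
    unfold zfBnd
    split_ifs with h
    · exact Or.inl ⟨h, by omega⟩
    · exact Or.inr ⟨h, by omega⟩
  have path01 : (pathGraph 2).Adj 0 1 := pathGraph_adj.mpr (Or.inl (by decide))
  have path10 : (pathGraph 2).Adj 1 0 := path01.symm
  have adjR0 : ∀ x : Fin (m+3), G.Adj (0, x) (1, x) := fun x => Or.inl ⟨path01, rfl⟩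
  have adjR1 : ∀ x : Fin (m+3), G.Adj (1, x) (0, x) := fun x => Or.inl ⟨path10, rfl⟩
  have adjP : ∀ (a : Fin 2) (x : Fin (m+3)), G.Adj (a, x) (a, x - 1) :=
    fun a x => Or.inr ⟨(cyc_adj x (x-1)).mpr (Or.inl rfl), rfl⟩
  have adjS : ∀ (a : Fin 2) (x : Fin (m+3)), G.Adj (a, x) (a, x + 1) :=
    fun a x => Or.inr ⟨(cyc_adj x (x+1)).mpr (Or.inr rfl), rfl⟩
  have hi : i = 0 ∨ i = 1 := by
    have := i.isLt
    rcases (by omega : i.val = 0 ∨ i.val = 1) with h | h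
    · exact Or.inl (Fin.ext h)
    · exact Or.inr (Fin.ext h)
  rcases hi with rfl | rfl
  · -- top row
    rw [zfS_memTop] at hu
    unfold zfBlueTop at hu
    rcases (by omega : j.val % 4 = 0 ∨ j.val % 4 = 1 ∨ j.val % 4 = 2) with h4 | h4 | h4
    · -- m%4 = 0: whites (0, j-1) and (1, j)
      have w2 : ((1 : Fin 2), j) ∉ zfS (m+3) := by
        rw [zfS_memBot]; unfold zfBlueBot; omega
      rcases eq_or_ne j.val 0 with h0 | h0
      · have w1 : ((0 : Fin 2), j - 1) ∉ zfS (m+3) := by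
          rw [zfS_memTop]; unfold zfBlueTop; rw [vpred0 j h0]; omega
        exact two_white hf (by simp [Prod.ext_iff]) (adjP 0 j) w1 (adjR0 j) w2
      · have w1 : ((0 : Fin 2), j - 1) ∉ zfS (m+3) := by
          rw [zfS_memTop]; unfold zfBlueTop; rw [vpred' j h0]; omega
        exact two_white hf (by simp [Prod.ext_iff]) (adjP 0 j) w1 (adjR0 j) w2
    · -- m%4 = 1
      rcases (by omega : j.val < zfBnd (m+3) ∨ ((m+3) % 4 = 3 ∧ j.val = m + 1)) with hlt | ⟨h3, hm1⟩
      · -- all neighbours blue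
        apply hvS
        obtain ⟨v1, v2⟩ := v
        rcases hadj with ⟨hp, he⟩ | ⟨hc, he⟩
        · -- rung neighbour (1, j)
          have hv1 : v1 = 1 := by
            rcases pathGraph_adj.mp hp with h | h
            · exact Fin.ext (by simpa using h.symm)
            · simp at h
          subst hv1
          cases he
          rw [zfS_memBot]; unfold zfBlueBot; omega
        · -- cycle neighbours
          cases he
          rcases (cyc_adj j v2).mp hc with rfl | rfl
          · show ((0 : Fin 2), j - 1) ∈ zfS (m+3)
            rw [zfS_memTop]; unfold zfBlueTop
            rw [vpred' j (by omega)]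
            omega
          · show ((0 : Fin 2), j + 1) ∈ zfS (m+3)
            rw [zfS_memTop]; unfold zfBlueTop
            rw [vsucc' j (by omega)]
            omega
      · -- j = n-2, n%4=3: whites (1,j) and (0, j+1)
        have w1 : ((1 : Fin 2), j) ∉ zfS (m+3) := by
          rw [zfS_memBot]; unfold zfBlueBot; omega
        have w2 : ((0 : Fin 2), j + 1) ∉ zfS (m+3) := by
          rw [zfS_memTop]; unfold zfBlueTop; rw [vsucc' j (by omega)]; omega
        exact two_white hf (by simp [Prod.ext_iff]) (adjR0 j) w1 (adjS 0 j) w2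
    · -- m%4 = 2: whites (0, j+1) and (1, j)
      have w1 : ((0 : Fin 2), j + 1) ∉ zfS (m+3) := by
        rw [zfS_memTop]; unfold zfBlueTop; rw [vsucc' j (by omega)]; omega
      have w2 : ((1 : Fin 2), j) ∉ zfS (m+3) := by
        rw [zfS_memBot]; unfold zfBlueBot; omega
      exact two_white hf (by simp [Prod.ext_iff]) (adjS 0 j) w1 (adjR0 j) w2
  · -- bottom row
    rw [zfS_memBot] at hu
    unfold zfBlueBot at hu
    rcases hu with ⟨hodd, hlt⟩ | ⟨hm1, h41⟩
    · have hub : j.val ≤ m + 1 := by omega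
      have w1 : ((1 : Fin 2), j - 1) ∉ zfS (m+3) := by
        rw [zfS_memBot]; unfold zfBlueBot; rw [vpred' j (by omega)]; omega
      rcases (by omega : j.val % 4 = 3 ∨ j.val % 4 = 1) with h4 | h4
      · have w2 : ((0 : Fin 2), j) ∉ zfS (m+3) := by
          rw [zfS_memTop]; unfold zfBlueTop; omega
        exact two_white hf (by simp [Prod.ext_iff]) (adjP 1 j) w1 (adjR1 j) w2
      · have w2 : ((1 : Fin 2), j + 1) ∉ zfS (m+3) := by
          rw [zfS_memBot]; unfold zfBlueBot; rw [vsucc' j (by omega)]; omega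
        have hne : ((1 : Fin 2), j - 1) ≠ ((1 : Fin 2), j + 1) := by
          intro h
          have h2 := congrArg (fun p => (Prod.snd p).val) h
          simp only at h2
          rw [vpred' j (by omega), vsucc' j (by omega)] at h2
          omega
        exact two_white hf hne (adjP 1 j) w1 (adjS 1 j) w2
    · -- j = n-1, n%4 ≤ 1: whites (0,j) and (1, j+1)
      have w1 : ((0 : Fin 2), j) ∉ zfS (m+3) := by
        rw [zfS_memTop]; unfold zfBlueTop; omega
      have w2 : ((1 : Fin 2), j + 1) ∉ zfS (m+3) := by
        rw [zfS_memBot]; unfold zfBlueBot; rw [vsucc0 j (by omega)]; omega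
      exact two_white hf (by simp [Prod.ext_iff]) (adjR1 j) w1 (adjS 1 j) w2


lemma zfS_card {n : ℕ} (hn : 3 ≤ n) : (n + 1) / 2 + 3 * (n / 4) ≤ (zfS n).ncard := by
  classical
  set A' : Finset ℕ := (range n).filter (fun m => zfBlueTop n m) with hA'
  set B' : Finset ℕ := (range n).filter (fun m => zfBlueBot n m) with hB'
  have hAlt : ∀ m ∈ A', m < n := fun m hm => mem_range.mp (mem_filter.mp hm).1
  have hBlt : ∀ m ∈ B', m < n := fun m hm => mem_range.mp (mem_filter.mp hm).1
  set T : Finset (Fin 2 × Fin n) :=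
    ((A'.attachFin hAlt).image fun j => ((0 : Fin 2), j)) ∪
    ((B'.attachFin hBlt).image fun j => ((1 : Fin 2), j)) with hT
  have hsub : ↑T ⊆ zfS n := by
    intro p hp
    simp only [hT, coe_union, Set.mem_union, coe_image, Set.mem_image, mem_coe,
      mem_attachFin] at hp
    rcases hp with ⟨j, hj, rfl⟩ | ⟨j, hj, rfl⟩
    · exact (zfS_memTop j).mpr (mem_filter.mp hj).2
    · exact (zfS_memBot j).mpr (mem_filter.mp hj).2
  have hcardT : T.card = A'.card + B'.card := by
    rw [hT, card_union_of_disjoint, card_image_of_injective _ (by intro a b h; simpa using h),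
      card_image_of_injective _ (by intro a b h; simpa using h), card_attachFin, card_attachFin]
    · simp only [Finset.disjoint_left, mem_image]
      rintro p ⟨j, _, rfl⟩ ⟨k, _, hk⟩
      exact absurd (congrArg Prod.fst hk) (by simp)
  have hstep : T.card ≤ (zfS n).ncard := by
    have := Set.ncard_le_ncard hsub (Set.toFinite _)
    simpa [Set.ncard_coe_finset] using this
  refine le_trans ?_ (hcardT ▸ hstep)
  -- now compute the cards
  have hA : A'.card = n - ((range n).filter (fun m => m % 4 = 3 ∨ m = n - 1)).card := by
    have h2 : ((range n).filter (fun m => m % 4 = 3 ∨ m = n - 1)).card +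
        ((range n).filter (fun m => ¬(m % 4 = 3 ∨ m = n - 1))).card = n := by
      rw [card_filter_add_card_filter_not, card_range]
    have h3 : A' = (range n).filter (fun m => ¬(m % 4 = 3 ∨ m = n - 1)) := by
      apply filter_congr; intro m _; unfold zfBlueTop; simp [not_or]
    rw [h3] at hA' ⊢; omega
  have hq : ((range n).filter (fun m => m % 4 = 3 ∨ m = n - 1)).card =
      if n % 4 = 0 then n / 4 else n / 4 + 1 := by
    split_ifs with h0
    · rw [← count_mod4 n]; apply congrArg; apply filter_congr; intro m hm
      simp only [mem_range] at hm; constructor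
      · rintro (h | h) <;> omega
      · intro h; exact Or.inl h
    · have : (range n).filter (fun m => m % 4 = 3 ∨ m = n - 1) =
          insert (n - 1) ((range n).filter (fun m => m % 4 = 3)) := by
        ext m; simp only [mem_filter, mem_insert, mem_range]
        constructor
        · rintro ⟨h1, h2 | h2⟩
          · exact Or.inr ⟨h1, h2⟩
          · exact Or.inl h2
        · rintro (rfl | ⟨h1, h2⟩)
          · exact ⟨by omega, Or.inr rfl⟩
          · exact ⟨h1, Or.inl h2⟩
      rw [this, card_insert_of_notMem (by simp; omega), count_mod4]
  have hB : B'.card = zfBnd n / 2 + (if n % 4 ≤ 1 then 1 else 0) := by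
    have hbl : zfBnd n ≤ n - 1 := by unfold zfBnd; split_ifs <;> omega
    have hB2 : (range n).filter (fun m => m % 2 = 1 ∧ m < zfBnd n) =
        (range (zfBnd n)).filter (fun m => m % 2 = 1) := by
      ext m; simp only [mem_filter, mem_range]; constructor
      · rintro ⟨_, h2, h3⟩; exact ⟨h3, h2⟩
      · rintro ⟨h1, h2⟩; exact ⟨by omega, h2, h1⟩
    split_ifs with h1
    · have : B' = insert (n - 1) ((range n).filter (fun m => m % 2 = 1 ∧ m < zfBnd n)) := by
        ext m; simp only [hB', mem_filter, mem_insert, mem_range]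
        unfold zfBlueBot; constructor
        · rintro ⟨hm, ⟨h2, h3⟩ | ⟨h2, _⟩⟩
          · exact Or.inr ⟨hm, h2, h3⟩
          · exact Or.inl h2
        · rintro (rfl | ⟨hm, h2, h3⟩)
          · exact ⟨by omega, Or.inr ⟨rfl, h1⟩⟩
          · exact ⟨hm, Or.inl ⟨h2, h3⟩⟩
      rw [this, card_insert_of_notMem (by simp only [mem_filter, mem_range]; omega)]
      rw [hB2, count_mod2]
    · have : B' = (range n).filter (fun m => m % 2 = 1 ∧ m < zfBnd n) := by
        apply filter_congr; intro m _; unfold zfBlueBot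
        constructor
        · rintro (h | ⟨_, h2⟩)
          · exact h
          · omega
        · exact Or.inl
      rw [this, hB2, count_mod2]
      omega
  rw [hA, hq, hB]
  unfold zfBnd
  split_ifs <;> omega

theorem failed_zf_prism_lower (n : ℕ) (hn : 3 ≤ n) :
    (n + 1) / 2 + 3 * (n / 4) ≤
      ZeroForcing.F ((SimpleGraph.pathGraph 2).boxProd (SimpleGraph.cycleGraph n)) := by
  set G := (SimpleGraph.pathGraph 2).boxProd (SimpleGraph.cycleGraph n) with hG
  have hfail : ZeroForcing.IsFailedSet G (zfS n) := by
    rintro ⟨k, hk⟩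
    obtain ⟨m, rfl⟩ : ∃ m, n = m + 3 := ⟨n - 3, by omega⟩
    rw [Function.iterate_fixed (zf_stalled m) k] at hk
    have h0 : ((1 : Fin 2), (⟨0, by omega⟩ : Fin (m+3))) ∈ zfS (m+3) := hk ▸ Set.mem_univ _
    rw [zfS_memBot] at h0
    unfold zfBlueBot at h0
    simp only [Fin.val_mk] at h0
    omega
  have hbdd : BddAbove {k | ∃ S : Set (Fin 2 × Fin n), S.ncard = k ∧ ZeroForcing.IsFailedSet G S} := by
    refine ⟨Nat.card (Fin 2 × Fin n), ?_⟩
    rintro k ⟨S, rfl, -⟩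
    exact le_trans (Set.ncard_le_ncard (Set.subset_univ S) Set.finite_univ)
      (le_of_eq (Set.ncard_univ _))
  exact le_trans (zfS_card hn) (le_csSup hbdd ⟨zfS n, rfl, hfail⟩)
end

section
/- For integers n ≥ m ≥ 2, F(P_n ⊠ P_m) ≥ nm − m + ⌈(m−4)/3⌉. -/
theorem failed_zf_strong_paths_lower (n m : ℕ) (hm : 2 ≤ m) (hnm : m ≤ n) :
    n * m - m + (m - 4 + 2) / 3 ≤
      ZeroForcing.F
        (ZeroForcing.strongProd (SimpleGraph.pathGraph n) (SimpleGraph.pathGraph m)) := by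
  have hn : 2 ≤ n := le_trans hm hnm
  set G := ZeroForcing.strongProd (SimpleGraph.pathGraph n) (SimpleGraph.pathGraph m) with hG
  set S : Set (Fin n × Fin m) :=
    {p | p.1.val + 1 < n ∨ (p.2.val % 3 = 2 ∧ p.2.val + 3 ≤ m)} with hSdef
  -- The set S is stalled: no vertex can be forced.
  have hstep : ZeroForcing.step G S = S := by
    apply Set.union_eq_left.mpr
    rintro ⟨i, j⟩ ⟨⟨a, b⟩, huS, hadj, hforce⟩
    by_contra hv
    have hvrow : i.val + 1 = n := by
      have := i.isLt
      have : ¬ (i.val + 1 < n ∨ (j.val % 3 = 2 ∧ j.val + 3 ≤ m)) := hv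
      omega
    have hvwhite : ¬ (j.val % 3 = 2 ∧ j.val + 3 ≤ m) := by
      intro h; exact hv (Or.inr h)
    rw [hG] at hadj
    obtain ⟨hne, hrow, hcol⟩ := hadj
    dsimp only at hrow hcol
    -- column relation between b and j
    have hcolnat : j.val = b.val ∨ j.val + 1 = b.val ∨ b.val + 1 = j.val := by
      rcases hcol with h | h
      · left; exact congrArg Fin.val h.symm
      · rw [SimpleGraph.pathGraph_adj] at h
        omega
    -- find a second white column adjacent to column b
    have hkey : ∃ c : ℕ, c < m ∧ (c = b.val ∨ c + 1 = b.val ∨ b.val + 1 = c) ∧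
        c ≠ j.val ∧ ¬ (c % 3 = 2 ∧ c + 3 ≤ m) := by
      have hb := b.isLt
      have hj := j.isLt
      by_cases h2 : j.val = b.val
      · by_cases h3 : 1 ≤ b.val ∧ ¬ ((b.val - 1) % 3 = 2 ∧ (b.val - 1) + 3 ≤ m)
        · exact ⟨b.val - 1, by omega, by omega, by omega, by omega⟩
        · exact ⟨b.val + 1, by omega, by omega, by omega, by omega⟩
      · by_cases h1 : b.val % 3 = 2 ∧ b.val + 3 ≤ m
        · by_cases h4 : j.val = b.val + 1
          · exact ⟨b.val - 1, by omega, by omega, by omega, by omega⟩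
          · exact ⟨b.val + 1, by omega, by omega, by omega, by omega⟩
        · exact ⟨b.val, by omega, by omega, by omega, by omega⟩
    obtain ⟨c, hc1, hc2, hc3, hc4⟩ := hkey
    have hwne : (a, b) ≠ ((i, ⟨c, hc1⟩) : Fin n × Fin m) := by
      intro h
      have h1 : a = i := congrArg Prod.fst h
      have h2 : b.val = c := congrArg (fun p => (Prod.snd p).val) h
      rcases huS with h3 | h3
      · have h3' : a.val + 1 < n := h3
        have := congrArg Fin.val h1; omega
      · exact hc4 (h2 ▸ h3)
    have hwadj : G.Adj (a, b) ((i, ⟨c, hc1⟩) : Fin n × Fin m) := by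
      rw [hG]
      refine ⟨hwne, hrow, ?_⟩
      rcases hc2 with h | h
      · left; exact Fin.ext h.symm
      · right
        rw [SimpleGraph.pathGraph_adj]
        dsimp only
        omega
    have hwS : ((i, ⟨c, hc1⟩) : Fin n × Fin m) ∉ S := by
      intro h
      rcases h with h | h
      · have h' : i.val + 1 < n := h
        omega
      · exact hc4 h
    have := hforce _ hwadj hwS
    have : c = j.val := congrArg (fun p => (Prod.snd p).val) this
    exact hc3 this
  -- S is a failed zero forcing set
  have hiter : ∀ k, (ZeroForcing.step G)^[k] S = S := by
    intro k
    induction k with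
    | zero => rfl
    | succ k ih => rw [Function.iterate_succ_apply', ih, hstep]
  have hneuniv : S ≠ Set.univ := by
    intro h
    have : ((⟨n - 1, by omega⟩ : Fin n), (⟨0, by omega⟩ : Fin m)) ∈ S :=
      h ▸ Set.mem_univ _
    rcases this with h' | h' <;> simp_all <;> omega
  have hfailed : ZeroForcing.IsFailedSet G S := by
    rintro ⟨k, hk⟩
    rw [hiter k] at hk
    exact hneuniv hk
  -- cardinality lower bound via an injection
  let f : (Fin (n - 1) × Fin m) ⊕ Fin ((m - 2) / 3) → Fin n × Fin m := fun x =>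
    match x with
    | .inl (i, j) => (Fin.castLE (by omega) i, j)
    | .inr k => (⟨n - 1, by omega⟩, ⟨3 * k.val + 2, by have := k.isLt; omega⟩)
  have hinj : Function.Injective f := by
    rintro (⟨i, j⟩ | k) (⟨i', j'⟩ | k') h
    · simp only [f, Prod.mk.injEq] at h
      obtain ⟨h1, h2⟩ := h
      have : i = i' := by
        simpa [Fin.ext_iff] using h1
      rw [this, h2]
    · exfalso
      have h1 : (Fin.castLE (by omega : n - 1 ≤ n) i).val = n - 1 :=
        congrArg (fun p => (Prod.fst p).val) h
      have := i.isLt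
      simp at h1
      omega
    · exfalso
      have h1 : n - 1 = (Fin.castLE (by omega : n - 1 ≤ n) i').val :=
        congrArg (fun p => (Prod.fst p).val) h
      have := i'.isLt
      simp at h1
      omega
    · have h1 : 3 * k.val + 2 = 3 * k'.val + 2 :=
        congrArg (fun p => (Prod.snd p).val) h
      have : k = k' := Fin.ext (by omega)
      rw [this]
  have hrange : Set.range f ⊆ S := by
    rintro p ⟨x, rfl⟩
    rcases x with ⟨i, j⟩ | k
    · left
      have := i.isLt
      simp only [f, Fin.coe_castLE]
      omega
    · right
      have := k.isLt
      constructor <;> simp only [f] <;> omega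
  have hcard : (n - 1) * m + (m - 2) / 3 ≤ S.ncard := by
    have h1 : (Set.range f).ncard ≤ S.ncard :=
      Set.ncard_le_ncard hrange (Set.toFinite S)
    have h2 : (Set.range f).ncard = (n - 1) * m + (m - 2) / 3 := by
      rw [← Nat.card_coe_set_eq, Nat.card_range_of_injective hinj]
      simp
    omega
  -- conclude
  have hbdd : BddAbove {k | ∃ T : Set (Fin n × Fin m), T.ncard = k ∧
      ZeroForcing.IsFailedSet G T} := by
    refine ⟨n * m, ?_⟩
    rintro k ⟨T, hT, -⟩
    rw [← hT]
    calc T.ncard ≤ (Set.univ : Set (Fin n × Fin m)).ncard :=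
          Set.ncard_le_ncard (Set.subset_univ T) (Set.toFinite _)
      _ = n * m := by rw [Set.ncard_univ]; simp
  have hmem : S.ncard ∈ {k | ∃ T : Set (Fin n × Fin m), T.ncard = k ∧
      ZeroForcing.IsFailedSet G T} := ⟨S, rfl, hfailed⟩
  have hle : S.ncard ≤ ZeroForcing.F G := le_csSup hbdd hmem
  have harith : n * m - m + (m - 4 + 2) / 3 ≤ (n - 1) * m + (m - 2) / 3 := by
    have h1 : (n - 1) * m = n * m - m := by
      rw [Nat.sub_one_mul]
    have h2 : (m - 4 + 2) / 3 ≤ (m - 2) / 3 := by omega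
    omega
  omega
end

section
/- For integers m, n > 2, F(C_m ⊠ C_n) ≥ ⌈mn/2⌉, where ⊠ denotes the strong product. -/
open ZeroForcing

theorem failed_zf_strong_cycles_lower (m n : ℕ) (hm : 2 < m) (hn : 2 < n) :
    (m * n + 1) / 2 ≤
      ZeroForcing.F
        (ZeroForcing.strongProd (SimpleGraph.cycleGraph m) (SimpleGraph.cycleGraph n)) := by
  haveI : NeZero m := ⟨by omega⟩
  haveI : NeZero n := ⟨by omega⟩
  set G := ZeroForcing.strongProd (SimpleGraph.cycleGraph m) (SimpleGraph.cycleGraph n) with hG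
  set S : Set (Fin m × Fin n) := {p | p.2 ≠ 0} with hS
  -- step fixes S
  have hstep : step G S = S := by
    apply Set.Subset.antisymm _ Set.subset_union_left
    rintro v (hv | ⟨u, hu, huv, hforce⟩)
    · exact hv
    · by_contra hv
      simp only [hS, Set.mem_setOf_eq, not_not] at hv
      -- u.2 adjacent to 0 in C_n
      have hadj2 : (SimpleGraph.cycleGraph n).Adj u.2 0 := by
        rcases huv.2.2 with h | h
        · exact absurd (h.trans hv) hu
        · rwa [hv] at h
      -- two white neighbors of u
      have hone1 : ((1 : Fin m) : ℕ) = 1 := by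
        rw [Fin.val_one']; exact Nat.mod_eq_of_lt (by omega)
      have hone : (SimpleGraph.cycleGraph m).Adj u.1 (u.1 + 1) := by
        rw [SimpleGraph.cycleGraph_adj']
        right
        have h' : u.1 + 1 - u.1 = 1 := add_sub_cancel_left _ _
        rw [h', hone1]
      have hw0 : G.Adj u (u.1, 0) := by
        refine ⟨?_, Or.inl rfl, Or.inr hadj2⟩
        intro h
        exact hu (congrArg Prod.snd h)
      have hw1 : G.Adj u (u.1 + 1, 0) := by
        refine ⟨?_, Or.inr hone, Or.inr hadj2⟩
        intro h
        exact hu (congrArg Prod.snd h)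
      have h0 : (u.1, (0 : Fin n)) ∉ S := by simp [hS]
      have h1 : ((u.1 + 1 : Fin m), (0 : Fin n)) ∉ S := by simp [hS]
      have e0 := hforce _ hw0 h0
      have e1 := hforce _ hw1 h1
      have heq : u.1 = u.1 + 1 := congrArg Prod.fst (e0.trans e1.symm)
      have h01 : (0 : Fin m) = 1 := by
        have h'' := congrArg (fun x => x - u.1) heq
        simpa using h''
      have hval := congrArg Fin.val h01
      rw [Fin.val_zero, hone1] at hval
      exact absurd hval (by omega)
  have hiter : ∀ k, (step G)^[k] S = S := by
    intro k
    induction k with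
    | zero => rfl
    | succ k ih => rw [Function.iterate_succ_apply', ih, hstep]
  have hfail : IsFailedSet G S := by
    rintro ⟨k, hk⟩
    rw [hiter] at hk
    have : ((0 : Fin m), (0 : Fin n)) ∈ S := hk ▸ Set.mem_univ _
    simp [hS] at this
  -- cardinality of S
  have hcard : S.ncard = m * (n - 1) := by
    rw [← Nat.card_coe_set_eq, Nat.card_eq_fintype_card]
    have e : S ≃ Fin m × {j : Fin n // j ≠ 0} :=
      { toFun := fun p => (p.1.1, ⟨p.1.2, p.2⟩)
        invFun := fun q => ⟨(q.1, q.2.1), q.2.2⟩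
        left_inv := fun p => rfl
        right_inv := fun q => rfl }
    rw [Fintype.card_congr e, Fintype.card_prod, Fintype.card_fin,
      Fintype.card_subtype_compl]
    simp
  -- membership and bddAbove
  have hmem : S.ncard ∈ {k | ∃ T : Set (Fin m × Fin n), T.ncard = k ∧ IsFailedSet G T} :=
    ⟨S, rfl, hfail⟩
  have hbdd : BddAbove {k | ∃ T : Set (Fin m × Fin n), T.ncard = k ∧ IsFailedSet G T} := by
    refine ⟨m * n, ?_⟩
    rintro k ⟨T, hT, -⟩
    calc k = T.ncard := hT.symm
      _ ≤ (Set.univ : Set (Fin m × Fin n)).ncard :=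
          Set.ncard_le_ncard (Set.subset_univ T) Set.finite_univ
      _ = m * n := by
          rw [Set.ncard_univ, Nat.card_eq_fintype_card, Fintype.card_prod,
            Fintype.card_fin, Fintype.card_fin]
  have hF : S.ncard ≤ F G := le_csSup hbdd hmem
  refine le_trans ?_ (hcard ▸ hF)
  have hsub : m * (n - 1) = m * n - m := by
    cases n with
    | zero => omega
    | succ k => simp [Nat.mul_succ]
  have h3 : m * 3 ≤ m * n := Nat.mul_le_mul_left m (by omega)
  omega
end
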